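/- Fix real numbers a < b, an integer n ≥ 1, and values V₁, …, Vₙ ∈ ℝ. Set x_i = a + i(b−a)/n, and for t ≥ 0 define the characteristics Xᵢⁿ(t) = a + ((b−a)/(4n)) Σ_{j=1}^{i} (2 + V_j t)² 1_{{2 + V_j t > 0}} for i = 0, …, n, the function qⁿ(t,x) = Σ_{i=1}^{n} (2V_i/(2 + V_i t)) 1_{{Xᵢ₋₁ⁿ(t) < x < Xᵢⁿ(t) and 2 + V_i t > 0}}, and uⁿ(t,x) = ∫_{−∞}^{x} qⁿ(t,y) dy. Then for every i ∈ {0, …, n} and every t ≥ 0 such that 2 + V_j t ≠ 0 for all j ≤ i, the function Xᵢⁿ is differentiable at t with (d/dt) Xᵢⁿ(t) = uⁿ(t, Xᵢⁿ(t)). -/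

import Mathlib

open MeasureTheory Real Set

/-- The characteristics of the explicit dissipative solution of the
deterministic Hunter–Saxton equation with `n`-step initial data satisfy the
characteristic ODE `(d/dt)Xᵢⁿ(t) = uⁿ(t, Xᵢⁿ(t))` away from wave-breaking times.
(Here `V j` for `j < n` is the value on the `(j+1)`-st subinterval.) -/
theorem box_characteristics_ode
    (a b : ℝ) (hab : a < b) (n : ℕ) (hn : 1 ≤ n) (V : ℕ → ℝ)
    (X : ℕ → ℝ → ℝ)
    (hX : ∀ i t, X i t = a + ((b - a) / (4 * n))
      * ∑ j ∈ Finset.range i,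
          (2 + V j * t)^2 * (if 0 < 2 + V j * t then (1:ℝ) else 0))
    (q : ℝ → ℝ → ℝ)
    (hq : ∀ t x, q t x = ∑ i ∈ Finset.range n,
      (2 * V i / (2 + V i * t))
        * (if X i t < x ∧ x < X (i+1) t ∧ 0 < 2 + V i * t then (1:ℝ) else 0))
    (u : ℝ → ℝ → ℝ)
    (hu : ∀ t x, u t x = ∫ y in Set.Iio x, q t y) :
    ∀ i ≤ n, ∀ t : ℝ, 0 ≤ t → (∀ j < i, 2 + V j * t ≠ 0) →
      HasDerivAt (X i) (u t (X i t)) t := by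
  classical
  intro i hi t ht hV
  have hn0 : (0:ℝ) < n := by exact_mod_cast hn
  set c : ℝ := (b - a) / (4 * n) with hc
  have hcpos : 0 < c := div_pos (by linarith) (by linarith)
  set f : ℕ → ℝ → ℝ :=
    fun j s => (2 + V j * s)^2 * (if 0 < 2 + V j * s then (1:ℝ) else 0) with hf
  have hf_nonneg : ∀ j s, 0 ≤ f j s := by
    intro j s
    by_cases h : 0 < 2 + V j * s <;> simp [hf, h] <;> positivity
  have hXf : ∀ k s, X k s = a + c * ∑ j ∈ Finset.range k, f j s := fun k s => hX k s
  have hlen : ∀ k, X (k+1) t = X k t + c * f k t := by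
    intro k
    rw [hXf, hXf, Finset.sum_range_succ]; ring
  have hmono : ∀ k l, k ≤ l → X k t ≤ X l t := by
    intro k l hkl
    rw [hXf, hXf]
    have hs : ∑ j ∈ Finset.range k, f j t ≤ ∑ j ∈ Finset.range l, f j t :=
      Finset.sum_le_sum_of_subset_of_nonneg (Finset.range_subset_range.2 hkl)
        (fun j _ _ => hf_nonneg j t)
    nlinarith
  set z := X i t with hz
  set D : ℕ → ℝ := fun k => if 0 < 2 + V k * t then 2 * V k / (2 + V k * t) else 0 with hD
  have hq' : ∀ y, q t y = ∑ k ∈ Finset.range n,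
      (Set.Ioo (X k t) (X (k+1) t)).indicator (fun _ => D k) y := by
    intro y
    rw [hq]
    refine Finset.sum_congr rfl fun k _ => ?_
    by_cases hk : 0 < 2 + V k * t
    · simp [hD, hk, Set.indicator_apply, Set.mem_Ioo, mul_ite, mul_one, mul_zero]
    · simp [hD, hk]
  have hint : ∀ k, Integrable
      ((Set.Ioo (X k t) (X (k+1) t)).indicator (fun _ => D k))
      (volume.restrict (Set.Iio z)) := by
    intro k
    apply Integrable.restrict
    rw [integrable_indicator_iff measurableSet_Ioo]
    exact integrableOn_const measure_Ioo_lt_top.ne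
  have hone : ∀ k, (∫ y in Set.Iio z,
        (Set.Ioo (X k t) (X (k+1) t)).indicator (fun _ => D k) y)
      = (volume (Set.Iio z ∩ Set.Ioo (X k t) (X (k+1) t))).toReal * D k := by
    intro k
    rw [setIntegral_indicator measurableSet_Ioo, setIntegral_const, smul_eq_mul]
    rfl
  have key : ∀ k ∈ Finset.range n,
      (volume (Set.Iio z ∩ Set.Ioo (X k t) (X (k+1) t))).toReal * D k
      = if k < i then c * (if 0 < 2 + V k * t then 2 * V k * (2 + V k * t) else 0)
        else 0 := by
    intro k _
    by_cases hki : k < i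
    · rw [if_pos hki]
      by_cases hk : 0 < 2 + V k * t
      · rw [if_pos hk]
        have hsub : Set.Ioo (X k t) (X (k+1) t) ⊆ Set.Iio z := by
          intro y hy
          exact lt_of_lt_of_le hy.2 (hmono (k+1) i hki)
        rw [Set.inter_eq_right.2 hsub, Real.volume_Ioo]
        have hlen' : X (k+1) t - X k t = c * (2 + V k * t)^2 := by
          rw [hlen]; simp [hf, hk]
        rw [hlen', ENNReal.toReal_ofReal (by positivity)]
        rw [hD]
        simp only [if_pos hk]
        field_simp
      · simp [hD, hk]
    · rw [if_neg hki]
      have hik : i ≤ k := le_of_not_gt hki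
      have hempty : Set.Iio z ∩ Set.Ioo (X k t) (X (k+1) t) = ∅ := by
        apply Set.eq_empty_iff_forall_notMem.2
        intro y hy
        have h1 : y < z := hy.1
        have h2 : X k t < y := hy.2.1
        have h3 : z ≤ X k t := hmono i k hik
        linarith
      rw [hempty]
      simp
  have hucalc : u t z = c * ∑ j ∈ Finset.range i,
      (if 0 < 2 + V j * t then 2 * V j * (2 + V j * t) else 0) := by
    rw [hu]
    simp only [hq']
    rw [integral_finset_sum _ (fun k _ => hint k)]
    rw [Finset.sum_congr rfl (fun k hk => (hone k).trans (key k hk))]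
    rw [show (∑ k ∈ Finset.range n, if k < i then
        c * (if 0 < 2 + V k * t then 2 * V k * (2 + V k * t) else 0) else 0)
      = ∑ k ∈ Finset.range i,
        c * (if 0 < 2 + V k * t then 2 * V k * (2 + V k * t) else 0) from ?_]
    · rw [Finset.mul_sum]
    · rw [← Finset.sum_subset (Finset.range_subset_range.2 hi)
        (fun x _ hx => if_neg (by simpa using hx))]
      exact Finset.sum_congr rfl fun k hk => if_pos (Finset.mem_range.1 hk)
  have hderivf : ∀ j < i, HasDerivAt (f j)
      (if 0 < 2 + V j * t then 2 * V j * (2 + V j * t) else 0) t := by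
    intro j hj
    have hjne := hV j hj
    by_cases hjp : 0 < 2 + V j * t
    · rw [if_pos hjp]
      have hg : HasDerivAt (fun s => (2 + V j * s)^2) (2 * V j * (2 + V j * t)) t := by
        have h1 : HasDerivAt (fun s : ℝ => 2 + V j * s) (V j) t := by
          simpa using ((hasDerivAt_id t).const_mul (V j)).const_add (2:ℝ)
        have : HasDerivAt (fun s => (2 + V j * s)^2) (((2:ℕ):ℝ) * (2 + V j * t)^(2-1) * V j) t := h1.fun_pow 2
        convert this using 1
        ring
      apply hg.congr_of_eventuallyEq
      have hopen : IsOpen {s : ℝ | 0 < 2 + V j * s} := by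
        apply isOpen_lt continuous_const
        fun_prop
      filter_upwards [hopen.mem_nhds hjp] with s hs
      simp only [hf]
      rw [if_pos hs, mul_one]
    · rw [if_neg hjp]
      have hjn : 2 + V j * t < 0 := lt_of_le_of_ne (not_lt.1 hjp) hjne
      apply (hasDerivAt_const t (0:ℝ)).congr_of_eventuallyEq
      have hopen : IsOpen {s : ℝ | 2 + V j * s < 0} := by
        apply isOpen_lt _ continuous_const
        fun_prop
      filter_upwards [hopen.mem_nhds hjn] with s hs
      simp only [hf]
      rw [if_neg (not_lt.2 hs.le), mul_zero]
  have hXeq : X i = fun s => a + c * ∑ j ∈ Finset.range i, f j s := funext (hXf i)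
  have hderiv : HasDerivAt (X i)
      (c * ∑ j ∈ Finset.range i,
        (if 0 < 2 + V j * t then 2 * V j * (2 + V j * t) else 0)) t := by
    rw [hXeq]
    exact ((HasDerivAt.fun_sum fun j hj =>
      hderivf j (Finset.mem_range.1 hj)).const_mul c).const_add a
  rw [hucalc] at *
  exact hderiv
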